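/- Let α be a partial transformation of {1, ..., n} with domain {i1 < i2 < ... < ik}, k ≥ 3, and let ᾱ be the full transformation defined by i ᾱ = i1 α for 1 ≤ i ≤ i2 - 1, i ᾱ = i_ℓ α for i_ℓ ≤ i < i_{ℓ+1} (ℓ = 2, ..., k-1), and i ᾱ = i_k α for i_k ≤ i ≤ n. Then α is oriented if and only if ᾱ is oriented. -/

import Mathlib

/-- A sequence `a : Fin t → Fin n` is cyclic if at most one index `i`
satisfies `a i > a (i+1)` (indices mod `t`). -/
def IsCyclicSeq {n t : ℕ} (a : Fin t → Fin n) : Prop :=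
  (Finset.univ.filter fun i : Fin t =>
    a ⟨(i.val + 1) % t, Nat.mod_lt _ i.pos⟩ < a i).card ≤ 1

/-- A sequence is anti-cyclic if at most one index `i`
satisfies `a i < a (i+1)` (indices mod `t`). -/
def IsAntiCyclicSeq {n t : ℕ} (a : Fin t → Fin n) : Prop :=
  (Finset.univ.filter fun i : Fin t =>
    a i < a ⟨(i.val + 1) % t, Nat.mod_lt _ i.pos⟩).card ≤ 1

/-- A sequence is oriented if it is cyclic or anti-cyclic. -/
def IsOrientedSeq {n t : ℕ} (a : Fin t → Fin n) : Prop :=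
  IsCyclicSeq a ∨ IsAntiCyclicSeq a

set_option maxHeartbeats 1000000

open Finset in
theorem aux_card {n k : ℕ} (hk : 3 ≤ k)
    (e : Fin k → Fin n) (he : StrictMono e) (f : Fin k → Fin n)
    (abar : Fin n → Fin n)
    (hlow : ∀ i : Fin n, i < e ⟨1, by linarith⟩ → abar i = f ⟨0, by linarith⟩)
    (hstep : ∀ (i : Fin n) (ℓ : Fin k), e ℓ ≤ i →
      (∀ m : Fin k, e m ≤ i → m ≤ ℓ) → abar i = f ℓ)
    (r : Fin n → Fin n → Prop) [DecidableRel r] (hirr : ∀ x, ¬ r x x) :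
    (Finset.univ.filter fun i : Fin n =>
      r (abar ⟨(i.val + 1) % n, Nat.mod_lt _ i.pos⟩) (abar i)).card
    = (Finset.univ.filter fun ℓ : Fin k =>
      r (f ⟨(ℓ.val + 1) % k, Nat.mod_lt _ ℓ.pos⟩) (f ℓ)).card := by
  classical
  have rc : ∀ {a b a' b' : Fin n}, a = a' → b = b' → r a' b' → r a b := by
    rintro a b a' b' rfl rfl h; exact h
  have hk0 : 0 < k := by omega
  have hn : 0 < n := (e ⟨0, hk0⟩).pos
  have hkn : k ≤ n := by
    have := Fintype.card_le_of_injective e he.injective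
    simpa using this
  set S : Fin n → Finset (Fin k) :=
    (fun i => Finset.univ.filter fun ℓ => e ℓ ≤ i) with hS
  set idx : Fin n → Fin k :=
    (fun i => if h : (S i).Nonempty then (S i).max' h else ⟨0, hk0⟩) with hidx
  have h1 : ∀ (i : Fin n) (m : Fin k), e m ≤ i → m ≤ idx i := by
    intro i m hm
    have hmem : m ∈ S i := by simp [hS, hm]
    have hne : (S i).Nonempty := ⟨m, hmem⟩
    simp only [hidx, dif_pos hne]
    exact Finset.le_max' _ _ hmem
  have h2 : ∀ (i : Fin n), (S i).Nonempty → e (idx i) ≤ i := by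
    intro i hne
    have : idx i ∈ S i := by
      simp only [hidx, dif_pos hne]; exact Finset.max'_mem _ hne
    simpa [hS] using this
  have h3 : ∀ i : Fin n, abar i = f (idx i) := by
    intro i
    by_cases hne : (S i).Nonempty
    · exact hstep i (idx i) (h2 i hne) (fun m hm => h1 i m hm)
    · have hidxi : idx i = ⟨0, hk0⟩ := by simp only [hidx, dif_neg hne]
      have h01 : i < e ⟨1, by omega⟩ := by
        by_contra hc
        push_neg at hc
        have h0 : e ⟨0, hk0⟩ ≤ i :=
          le_trans (le_of_lt (he (show (⟨0, hk0⟩ : Fin k) < ⟨1, by omega⟩ by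
            simp [Fin.lt_def]))) hc
        exact hne ⟨⟨0, hk0⟩, by simp [hS, h0]⟩
      rw [hlow i h01, hidxi]
  have h7 : ∀ ℓ : Fin k, idx (e ℓ) = ℓ := by
    intro ℓ
    have hne : (S (e ℓ)).Nonempty := ⟨ℓ, by simp [hS]⟩
    refine le_antisymm ?_ (h1 _ _ le_rfl)
    exact (he.le_iff_le).1 (h2 _ hne)
  have h8 : ∀ (ℓ : Fin k), 0 < ℓ.val → ∀ (hp : (e ℓ).val - 1 < n),
      idx ⟨(e ℓ).val - 1, hp⟩ = ⟨ℓ.val - 1, by omega⟩ := by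
    intro ℓ hℓ hp
    have hlt : e ⟨ℓ.val - 1, by omega⟩ < e ℓ := he (by simp [Fin.lt_def]; omega)
    have hmem : e ⟨ℓ.val - 1, by omega⟩ ≤ (⟨(e ℓ).val - 1, hp⟩ : Fin n) := by
      simp only [Fin.le_def]
      have := (Fin.lt_def).1 hlt
      omega
    have hne : (S ⟨(e ℓ).val - 1, hp⟩).Nonempty :=
      ⟨⟨ℓ.val - 1, by omega⟩, by simp [hS, hmem]⟩
    refine le_antisymm ?_ (h1 _ _ hmem)
    have hle := h2 _ hne
    simp only [Fin.le_def] at hle ⊢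
    by_contra hc
    push_neg at hc
    have hll : ℓ ≤ idx ⟨(e ℓ).val - 1, hp⟩ := by rw [Fin.le_def]; omega
    have := (he.le_iff_le).2 hll
    simp only [Fin.le_def] at this
    omega
  have h4 : ∀ (i j : Fin n), i ≤ j → idx i ≤ idx j := by
    intro i j hij
    by_cases hne : (S i).Nonempty
    · exact h1 j _ (le_trans (h2 i hne) hij)
    · simp only [hidx, dif_neg hne]
      simp [Fin.le_def]
  have h5 : ∀ (i : ℕ) (h1n : i + 1 < n),
      (idx ⟨i + 1, h1n⟩).val ≤ (idx ⟨i, by omega⟩).val + 1 := by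
    intro i h1n
    by_contra hc
    push_neg at hc
    set M := idx ⟨i + 1, h1n⟩ with hM
    have hne : (S ⟨i + 1, h1n⟩).Nonempty := by
      by_contra hne
      have hM0 : M = ⟨0, hk0⟩ := by simp only [hM, hidx, dif_neg hne]
      rw [hM0] at hc; simp at hc
    have heM : (e M).val ≤ i + 1 := h2 _ hne
    have hℓ' : (idx ⟨i, by omega⟩).val + 1 < k := by
      have := M.isLt; omega
    set ℓ' : Fin k := ⟨(idx ⟨i, by omega⟩).val + 1, hℓ'⟩ with hℓ'def
    have hlt : e ℓ' < e M := he (by simp [Fin.lt_def, hℓ'def]; omega)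
    have hle : e ℓ' ≤ (⟨i, by omega⟩ : Fin n) := by
      simp only [Fin.le_def]
      have := (Fin.lt_def).1 hlt
      omega
    have := h1 _ _ hle
    simp only [Fin.le_def, hℓ'def] at this
    omega
  have h6 : ∀ (i : ℕ) (h1n : i + 1 < n),
      idx ⟨i + 1, h1n⟩ ≠ idx ⟨i, by omega⟩ →
      (idx ⟨i + 1, h1n⟩).val = (idx ⟨i, by omega⟩).val + 1 ∧
      (e (idx ⟨i + 1, h1n⟩)).val = i + 1 := by
    intro i h1n hne
    have hmono := h4 ⟨i, by omega⟩ ⟨i + 1, h1n⟩ (by simp [Fin.le_def])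
    have hsucc := h5 i h1n
    simp only [Fin.le_def] at hmono
    have hval : (idx ⟨i + 1, h1n⟩).val = (idx ⟨i, by omega⟩).val + 1 := by
      rcases Nat.lt_or_ge (idx ⟨i, by omega⟩).val (idx ⟨i + 1, h1n⟩).val with h | h
      · omega
      · exact absurd (Fin.ext (by omega : (idx ⟨i + 1, h1n⟩).val = (idx ⟨i, by omega⟩).val)) hne
    refine ⟨hval, ?_⟩
    have hSne : (S ⟨i + 1, h1n⟩).Nonempty := by
      by_contra hc
      have h0 : idx ⟨i + 1, h1n⟩ = ⟨0, hk0⟩ := by simp only [hidx, dif_neg hc]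
      rw [h0] at hval; simp at hval
    have hle : (e (idx ⟨i + 1, h1n⟩)).val ≤ i + 1 := h2 _ hSne
    by_contra hc
    have hle' : e (idx ⟨i + 1, h1n⟩) ≤ (⟨i, by omega⟩ : Fin n) := by
      simp only [Fin.le_def]; omega
    have := h1 _ _ hle'
    simp only [Fin.le_def] at this
    omega
  have hzero : idx ⟨0, hn⟩ = ⟨0, hk0⟩ := by
    refine le_antisymm ?_ (by simp [Fin.le_def])
    by_cases hne : (S ⟨0, hn⟩).Nonempty
    · have hle := h2 _ hne
      have hh : e (idx ⟨0, hn⟩) ≤ e ⟨0, hk0⟩ := by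
        simp only [Fin.le_def] at hle ⊢; omega
      exact (he.le_iff_le).1 hh
    · simp only [hidx, dif_neg hne]
      exact le_refl _
  have hlast : idx ⟨n - 1, by omega⟩ = ⟨k - 1, by omega⟩ := by
    refine le_antisymm (by simp [Fin.le_def]; omega) ?_
    refine h1 _ _ ?_
    simp only [Fin.le_def]
    have := (e ⟨k - 1, by omega⟩).isLt
    omega
  refine (Finset.card_bij
    (fun (ℓ : Fin k) (_ : ℓ ∈ _) =>
      if h : ℓ.val + 1 < k then
        (⟨(e ⟨ℓ.val + 1, h⟩).val - 1, by have := (e ⟨ℓ.val + 1, h⟩).isLt; omega⟩ : Fin n)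
      else ⟨n - 1, by omega⟩)
    ?_ ?_ ?_).symm
  · -- maps to
    intro ℓ hℓ
    simp only [Finset.mem_filter, Finset.mem_univ, true_and] at hℓ ⊢
    by_cases h : ℓ.val + 1 < k
    · rw [dif_pos h]
      have he1 : 0 < (e ⟨ℓ.val + 1, h⟩).val := by
        have := he (show (⟨0, hk0⟩ : Fin k) < ⟨ℓ.val + 1, h⟩ by simp [Fin.lt_def])
        simp only [Fin.lt_def] at this; omega
      have hel : (e ⟨ℓ.val + 1, h⟩).val < n := (e ⟨ℓ.val + 1, h⟩).isLt
      have hnx : ((e ⟨ℓ.val + 1, h⟩).val - 1 + 1) % n = (e ⟨ℓ.val + 1, h⟩).val := by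
        rw [show (e ⟨ℓ.val + 1, h⟩).val - 1 + 1 = (e ⟨ℓ.val + 1, h⟩).val by omega,
          Nat.mod_eq_of_lt hel]
      have hab1 : abar ⟨((e ⟨ℓ.val + 1, h⟩).val - 1 + 1) % n, Nat.mod_lt _ hn⟩
          = f ⟨ℓ.val + 1, h⟩ := by
        have hee : (⟨((e ⟨ℓ.val + 1, h⟩).val - 1 + 1) % n, Nat.mod_lt _ hn⟩ : Fin n)
            = e ⟨ℓ.val + 1, h⟩ := Fin.ext (by simpa using hnx)
        rw [hee, h3, h7]
      have hab2 : abar ⟨(e ⟨ℓ.val + 1, h⟩).val - 1, by omega⟩ = f ℓ := by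
        rw [h3, h8 ⟨ℓ.val + 1, h⟩ (by simp)]
        congr 1
      have hmodk : (ℓ.val + 1) % k = ℓ.val + 1 := Nat.mod_eq_of_lt h
      have hfk : (⟨(ℓ.val + 1) % k, Nat.mod_lt _ ℓ.pos⟩ : Fin k) = ⟨ℓ.val + 1, h⟩ :=
        Fin.ext (by simpa using hmodk)
      rw [hfk] at hℓ
      exact rc hab1 hab2 hℓ
    · rw [dif_neg h]
      have hℓval : ℓ.val = k - 1 := by have := ℓ.isLt; omega
      have hnx : (n - 1 + 1) % n = 0 := by
        rw [show n - 1 + 1 = n by omega, Nat.mod_self]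
      have hab1 : abar ⟨(n - 1 + 1) % n, Nat.mod_lt _ hn⟩ = f ⟨0, hk0⟩ := by
        have hee : (⟨(n - 1 + 1) % n, Nat.mod_lt _ hn⟩ : Fin n) = ⟨0, hn⟩ :=
          Fin.ext (by simpa using hnx)
        rw [hee, h3, hzero]
      have hab2 : abar ⟨n - 1, by omega⟩ = f ⟨k - 1, by omega⟩ := by
        rw [h3, hlast]
      have h1' : ((ℓ.val + 1) % k) = 0 := by
        rw [show ℓ.val + 1 = k by omega, Nat.mod_self]
      have hfe : (⟨(ℓ.val + 1) % k, Nat.mod_lt _ ℓ.pos⟩ : Fin k) = ⟨0, hk0⟩ :=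
        Fin.ext (by simpa using h1')
      have hfe2 : ℓ = ⟨k - 1, by omega⟩ := Fin.ext hℓval
      rw [hfe, hfe2] at hℓ
      exact rc hab1 hab2 hℓ
  · -- injective
    intro ℓ₁ hℓ₁ ℓ₂ hℓ₂ heq
    by_cases h₁ : ℓ₁.val + 1 < k <;> by_cases h₂ : ℓ₂.val + 1 < k
    · rw [dif_pos h₁, dif_pos h₂] at heq
      have h1pos : 0 < (e ⟨ℓ₁.val + 1, h₁⟩).val := by
        have := he (show (⟨0, hk0⟩ : Fin k) < ⟨ℓ₁.val + 1, h₁⟩ by simp [Fin.lt_def])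
        simp only [Fin.lt_def] at this; omega
      have h2pos : 0 < (e ⟨ℓ₂.val + 1, h₂⟩).val := by
        have := he (show (⟨0, hk0⟩ : Fin k) < ⟨ℓ₂.val + 1, h₂⟩ by simp [Fin.lt_def])
        simp only [Fin.lt_def] at this; omega
      have hvals : (e ⟨ℓ₁.val + 1, h₁⟩).val = (e ⟨ℓ₂.val + 1, h₂⟩).val := by
        have := Fin.val_eq_of_eq heq
        simp only at this
        omega
      have := he.injective (Fin.ext hvals)
      have := Fin.val_eq_of_eq this
      simp only at this
      exact Fin.ext (by omega)
    · exfalso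
      rw [dif_pos h₁, dif_neg h₂] at heq
      have hval := Fin.val_eq_of_eq heq
      simp only at hval
      have := (e ⟨ℓ₁.val + 1, h₁⟩).isLt
      omega
    · exfalso
      rw [dif_neg h₁, dif_pos h₂] at heq
      have hval := Fin.val_eq_of_eq heq
      simp only at hval
      have := (e ⟨ℓ₂.val + 1, h₂⟩).isLt
      omega
    · exact Fin.ext (by have := ℓ₁.isLt; have := ℓ₂.isLt; omega)
  · -- surjective
    intro i hi
    simp only [Finset.mem_filter, Finset.mem_univ, true_and] at hi
    by_cases hend : i.val = n - 1
    · refine ⟨⟨k - 1, by omega⟩, Finset.mem_filter.2 ⟨Finset.mem_univ _, ?_⟩, ?_⟩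
      · have hie : i = ⟨n - 1, by omega⟩ := Fin.ext hend
        rw [hie] at hi
        have hnx : ((n - 1 : ℕ) + 1) % n = 0 := by
          rw [show (n - 1 : ℕ) + 1 = n by omega, Nat.mod_self]
        have hab1 : abar ⟨((n - 1 : ℕ) + 1) % n, Nat.mod_lt _ hn⟩ = f ⟨0, hk0⟩ := by
          have hee : (⟨((n - 1 : ℕ) + 1) % n, Nat.mod_lt _ hn⟩ : Fin n) = ⟨0, hn⟩ :=
            Fin.ext (by simpa using hnx)
          rw [hee, h3, hzero]
        have hab2 : abar ⟨n - 1, by omega⟩ = f ⟨k - 1, by omega⟩ :=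
          (h3 _).trans (congrArg f hlast)
        have hmk : ((k - 1 : ℕ) + 1) % k = 0 := by
          rw [show (k - 1 : ℕ) + 1 = k by omega, Nat.mod_self]
        have hgoal1 : (⟨((k - 1 : ℕ) + 1) % k, Nat.mod_lt _ (by omega)⟩ : Fin k)
            = ⟨0, hk0⟩ := Fin.ext (by simpa using hmk)
        exact rc (congrArg f hgoal1) rfl (rc hab1.symm hab2.symm hi)
      · simp only [dif_neg (show ¬((⟨k - 1, by omega⟩ : Fin k).val + 1 < k) by simp; omega)]
        exact Fin.ext hend.symm
    · have hlt : i.val + 1 < n := by have := i.isLt; omega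
      have hnx : (i.val + 1) % n = i.val + 1 := Nat.mod_eq_of_lt hlt
      have hieq : (⟨(i.val + 1) % n, Nat.mod_lt _ i.pos⟩ : Fin n) = ⟨i.val + 1, hlt⟩ :=
        Fin.ext (by simpa using hnx)
      rw [hieq, h3, h3] at hi
      have hii : i = ⟨i.val, i.isLt⟩ := Fin.ext rfl
      have hne : idx ⟨i.val + 1, hlt⟩ ≠ idx ⟨i.val, by omega⟩ := by
        intro hcc
        have hidi : idx ⟨i.val, by omega⟩ = idx i := by congr 1
        rw [hcc, hidi] at hi
        exact hirr _ hi
      obtain ⟨hval, hev⟩ := h6 i.val hlt hne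
      have hidk : (idx ⟨i.val, i.isLt⟩).val + 1 < k := by
        have := (idx ⟨i.val + 1, hlt⟩).isLt
        omega
      refine ⟨idx ⟨i.val, i.isLt⟩, Finset.mem_filter.2 ⟨Finset.mem_univ _, ?_⟩, ?_⟩
      · have hmodk : ((idx ⟨i.val, i.isLt⟩).val + 1) % k = (idx ⟨i.val, i.isLt⟩).val + 1 :=
          Nat.mod_eq_of_lt hidk
        have hfk : (⟨((idx ⟨i.val, i.isLt⟩).val + 1) % k,
            Nat.mod_lt _ (idx ⟨i.val, i.isLt⟩).pos⟩ : Fin k) = idx ⟨i.val + 1, hlt⟩ :=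
          Fin.ext (by simpa [hmodk] using hval.symm)
        rw [hfk]
        have hidi : idx ⟨i.val, i.isLt⟩ = idx i := by congr 1
        rw [hidi]
        exact hi
      · simp only [dif_pos hidk]
        have heq2 : e ⟨(idx ⟨i.val, i.isLt⟩).val + 1, hidk⟩ = e (idx ⟨i.val + 1, hlt⟩) := by
          congr 1
          exact Fin.ext hval.symm
        refine Fin.ext ?_
        simp only [heq2, hev]
        omega

/-- A partial transformation with domain i₁ < ⋯ < i_k (k ≥ 3), given by its
increasing domain enumeration e and images f, is oriented iff
the associated full transformation ᾱ is oriented, where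
ᾱ agrees with f 0 below e 1 (in particular below e 0), and equals f ℓ on
[e ℓ, e (ℓ+1)) and f (k-1) above e (k-1). -/
theorem por_iff_bar_oriented {n k : ℕ} (hk : 3 ≤ k)
    (e : Fin k → Fin n) (he : StrictMono e) (f : Fin k → Fin n)
    (abar : Fin n → Fin n)
    (hlow : ∀ i : Fin n, i < e ⟨1, by omega⟩ → abar i = f ⟨0, by omega⟩)
    (hstep : ∀ (i : Fin n) (ℓ : Fin k), e ℓ ≤ i →
      (∀ m : Fin k, e m ≤ i → m ≤ ℓ) → abar i = f ℓ) :
    IsOrientedSeq f ↔ IsOrientedSeq abar := by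
  classical
  have h1 := aux_card hk e he f abar hlow hstep (· < ·) (fun x => lt_irrefl x)
  have h2 := aux_card hk e he f abar hlow hstep (fun x y => y < x) (fun x => lt_irrefl x)
  unfold IsOrientedSeq IsCyclicSeq IsAntiCyclicSeq
  rw [h1, h2]
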